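/- For fixed a ∈ (0,1), the function u ↦ √(1-au²)/(1-u²) is convex, positive, and increasing on (0,1); consequently, for each fixed φ, u ↦ √(1-u² sin²φ)/(1-u²) is convex on (0,1), and hence v(z)/z = (2/π)∫₀^{π/2} √(1-z²sin²φ)/(1-z²) dφ is convex in z on (0,1). -/

import Mathlib

open Set Real

lemma my_concave_inv {s : Set ℝ} {f : ℝ → ℝ} (hf : ConcaveOn ℝ s f)
    (hpos : ∀ x ∈ s, 0 < f x) : ConvexOn ℝ s fun x => (f x)⁻¹ := by
  refine ⟨hf.1, fun x hx y hy a b ha hb hab => ?_⟩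
  have hx' := hpos x hx
  have hy' := hpos y hy
  have h1 : a * f x + b * f y ≤ f (a • x + b • y) := by
    simpa [smul_eq_mul] using hf.2 hx hy ha hb hab
  have hm : 0 < a * f x + b * f y := by
    rcases lt_or_ge 0 a with h | h
    · have : 0 ≤ b * f y := mul_nonneg hb hy'.le
      nlinarith
    · have ha0 : a = 0 := le_antisymm h ha
      have hb1 : b = 1 := by linarith
      simp [ha0, hb1, hy']
  have h2 : (f (a • x + b • y))⁻¹ ≤ (a * f x + b * f y)⁻¹ := inv_anti₀ hm h1
  have h3 : (a * f x + b * f y)⁻¹ ≤ a * (f x)⁻¹ + b * (f y)⁻¹ := by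
    have := (convexOn_zpow (𝕜 := ℝ) (-1)).2 (mem_Ioi.2 hx') (mem_Ioi.2 hy') ha hb hab
    simpa [smul_eq_mul, zpow_neg, zpow_one] using this
  simpa [smul_eq_mul] using h2.trans h3

/-- 1 - c u^2 > 0 on Ioo 0 1 for c ≤ 1 -/
lemma my_pos (c : ℝ) (hc1 : c ≤ 1) {u : ℝ} (hu : u ∈ Set.Ioo (0:ℝ) 1) :
    0 < 1 - c * u ^ 2 := by
  have h1 : u ^ 2 < 1 := by nlinarith [hu.1, hu.2]
  nlinarith [sq_nonneg u]

/-- u ↦ 1 - c u^2 is concave on Ioo 0 1 for c ≥ 0 -/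
lemma my_inner_concave (c : ℝ) (hc0 : 0 ≤ c) :
    ConcaveOn ℝ (Set.Ioo (0:ℝ) 1) (fun u => 1 - c * u ^ 2) := by
  refine ⟨convex_Ioo 0 1, fun x hx y hy a b ha hb hab => ?_⟩
  have hsq : (a * x + b * y) ^ 2 ≤ a * x ^ 2 + b * y ^ 2 := by nlinarith [sq_nonneg (x - y), sq_nonneg (a*x - b*y), mul_nonneg ha hb]
  simp only [smul_eq_mul]
  nlinarith [mul_le_mul_of_nonneg_left hsq hc0]

/-- u ↦ √(1 - c u^2) is concave on Ioo 0 1 for 0 ≤ c ≤ 1 -/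
lemma my_sqrt_concave (c : ℝ) (hc0 : 0 ≤ c) (hc1 : c ≤ 1) :
    ConcaveOn ℝ (Set.Ioo (0:ℝ) 1) (fun u => Real.sqrt (1 - c * u ^ 2)) := by
  refine ⟨convex_Ioo 0 1, fun x hx y hy a b ha hb hab => ?_⟩
  have hx' := my_pos c hc1 hx
  have hy' := my_pos c hc1 hy
  have hin : a * (1 - c * x ^ 2) + b * (1 - c * y ^ 2) ≤ 1 - c * (a * x + b * y) ^ 2 := by
    simpa [smul_eq_mul] using (my_inner_concave c hc0).2 hx hy ha hb hab
  have hsq : a • Real.sqrt (1 - c * x ^ 2) + b • Real.sqrt (1 - c * y ^ 2) ≤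
      Real.sqrt (a * (1 - c * x ^ 2) + b * (1 - c * y ^ 2)) := by
    have := (Real.strictConcaveOn_sqrt.concaveOn).2 (mem_Ici.2 hx'.le) (mem_Ici.2 hy'.le) ha hb hab
    simpa [smul_eq_mul] using this
  simp only [smul_eq_mul] at *
  exact hsq.trans (Real.sqrt_le_sqrt hin)

lemma my_key (c : ℝ) (hc0 : 0 ≤ c) (hc1 : c ≤ 1) :
    ConvexOn ℝ (Set.Ioo (0:ℝ) 1) (fun u => Real.sqrt (1 - c * u ^ 2) / (1 - u ^ 2)) ∧
    MonotoneOn (fun u => Real.sqrt (1 - c * u ^ 2) / (1 - u ^ 2)) (Set.Ioo (0:ℝ) 1) := by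
  set s : Set ℝ := Set.Ioo (0:ℝ) 1 with hs
  -- the two factors
  set p : ℝ → ℝ := fun u => c + (1 - c) * (1 - u ^ 2)⁻¹ with hp
  set q : ℝ → ℝ := fun u => (Real.sqrt (1 - c * u ^ 2))⁻¹ with hq
  have hden : ∀ u ∈ s, (0:ℝ) < 1 - u ^ 2 := by
    intro u hu
    have := my_pos 1 le_rfl hu
    linarith
  have hnum : ∀ u ∈ s, (0:ℝ) < 1 - c * u ^ 2 := fun u hu => my_pos c hc1 hu
  have hqpos : ∀ u ∈ s, 0 < q u := by
    intro u hu
    exact inv_pos.2 (Real.sqrt_pos.2 (hnum u hu))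
  have hppos : ∀ u ∈ s, 0 < p u := by
    intro u hu
    have h1 := hden u hu
    have : 0 < (1 - u ^ 2)⁻¹ := inv_pos.2 h1
    have ht : 1 < (1 - u ^ 2)⁻¹ := by
      rw [one_lt_inv₀ h1]
      have := hu.1
      nlinarith
    simp only [hp]
    nlinarith [mul_le_mul_of_nonneg_left ht.le (sub_nonneg.2 hc1)]
  -- monotonicity of the factors
  have hmono_inv : MonotoneOn (fun u : ℝ => (1 - u ^ 2)⁻¹) s := by
    intro u hu v hv huv
    have h1 := hden u hu
    have h2 := hden v hv
    have : 1 - v ^ 2 ≤ 1 - u ^ 2 := by nlinarith [hu.1]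
    exact inv_anti₀ h2 this
  have hpmono : MonotoneOn p s := by
    intro u hu v hv huv
    have := hmono_inv hu hv huv
    simp only [hp]
    nlinarith [mul_le_mul_of_nonneg_left this (sub_nonneg.2 hc1)]
  have hqmono : MonotoneOn q s := by
    intro u hu v hv huv
    have h1 := hnum u hu
    have h2 := hnum v hv
    have huv2 : u ^ 2 ≤ v ^ 2 := by nlinarith [hu.1]
    have h3 : 1 - c * v ^ 2 ≤ 1 - c * u ^ 2 := by nlinarith [mul_le_mul_of_nonneg_left huv2 hc0]
    have h4 : Real.sqrt (1 - c * v ^ 2) ≤ Real.sqrt (1 - c * u ^ 2) := Real.sqrt_le_sqrt h3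
    exact inv_anti₀ (Real.sqrt_pos.2 h2) h4
  -- convexity of the factors
  have hpconv : ConvexOn ℝ s p := by
    have ht : ConvexOn ℝ s fun u : ℝ => (1 - u ^ 2)⁻¹ := by
      have := my_concave_inv (f := fun u : ℝ => 1 - 1 * u ^ 2)
        ((my_inner_concave 1 zero_le_one)) (fun u hu => my_pos 1 le_rfl hu)
      exact this.congr (fun u hu => by norm_num)
    have := (ht.smul (sub_nonneg.2 hc1)).add_const c
    exact this.congr (fun u hu => by simp [hp]; ring)
  have hqconv : ConvexOn ℝ s q :=
    my_concave_inv (my_sqrt_concave c hc0 hc1)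
      (fun u hu => Real.sqrt_pos.2 (hnum u hu))
  -- product
  have hprod : ConvexOn ℝ s (p * q) :=
    hpconv.mul hqconv (fun u hu => (hppos u hu).le) (fun u hu => (hqpos u hu).le)
      (hpmono.monovaryOn hqmono)
  have heq : Set.EqOn (p * q) (fun u => Real.sqrt (1 - c * u ^ 2) / (1 - u ^ 2)) s := by
    intro u hu
    have h1 := hden u hu
    have h2 := hnum u hu
    have hsq : Real.sqrt (1 - c * u ^ 2) * Real.sqrt (1 - c * u ^ 2) = 1 - c * u ^ 2 :=
      Real.mul_self_sqrt h2.le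
    have hspos : 0 < Real.sqrt (1 - c * u ^ 2) := Real.sqrt_pos.2 h2
    simp only [Pi.mul_apply, hp, hq]
    field_simp
    nlinarith [hsq]
  constructor
  · exact hprod.congr heq
  · intro u hu v hv huv
    have h1 : p u * q u ≤ p v * q v :=
      mul_le_mul (hpmono hu hv huv) (hqmono hu hv huv) (hqpos u hu).le (hppos v hv).le
    calc Real.sqrt (1 - c * u ^ 2) / (1 - u ^ 2) = (p * q) u := (heq hu).symm
      _ ≤ (p * q) v := h1
      _ = _ := heq hv

theorem stmt_18 :
    (∀ a ∈ Set.Ioo (0:ℝ) 1,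
      ConvexOn ℝ (Set.Ioo 0 1) (fun u => Real.sqrt (1 - a * u ^ 2) / (1 - u ^ 2)) ∧
      (∀ u ∈ Set.Ioo (0:ℝ) 1, 0 < Real.sqrt (1 - a * u ^ 2) / (1 - u ^ 2)) ∧
      MonotoneOn (fun u => Real.sqrt (1 - a * u ^ 2) / (1 - u ^ 2)) (Set.Ioo 0 1)) ∧
    (∀ φ : ℝ,
      ConvexOn ℝ (Set.Ioo 0 1)
        (fun u => Real.sqrt (1 - u ^ 2 * Real.sin φ ^ 2) / (1 - u ^ 2))) ∧
    ConvexOn ℝ (Set.Ioo 0 1)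
      (fun z => (2 / Real.pi) *
        ∫ φ in (0:ℝ)..(Real.pi / 2),
          Real.sqrt (1 - z ^ 2 * Real.sin φ ^ 2) / (1 - z ^ 2)) := by
  have hΦ : ∀ φ : ℝ, ConvexOn ℝ (Set.Ioo 0 1)
      (fun u => Real.sqrt (1 - u ^ 2 * Real.sin φ ^ 2) / (1 - u ^ 2)) := by
    intro φ
    exact ((my_key (Real.sin φ ^ 2) (sq_nonneg _) (Real.sin_sq_le_one φ)).1).congr
      (fun u hu => by rw [mul_comm])
  refine ⟨fun a ha => ⟨(my_key a ha.1.le ha.2.le).1, fun u hu =>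
      div_pos (Real.sqrt_pos.2 (my_pos a ha.2.le hu))
        (by nlinarith [hu.1, hu.2] : (0:ℝ) < 1 - u ^ 2),
      (my_key a ha.1.le ha.2.le).2⟩, hΦ, ?_⟩
  have hint : ∀ z ∈ Set.Ioo (0:ℝ) 1, IntervalIntegrable
      (fun φ => Real.sqrt (1 - z ^ 2 * Real.sin φ ^ 2) / (1 - z ^ 2))
      MeasureTheory.volume 0 (Real.pi / 2) := by
    intro z hz
    have : Continuous fun φ => Real.sqrt (1 - z ^ 2 * Real.sin φ ^ 2) / (1 - z ^ 2) := by
      apply Continuous.div_const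
      exact (continuous_const.sub ((continuous_const.mul
        ((Real.continuous_sin.pow 2)))) ).sqrt
    exact this.intervalIntegrable _ _
  refine ⟨convex_Ioo 0 1, fun x hx y hy a b ha hb hab => ?_⟩
  have hz : a • x + b • y ∈ Set.Ioo (0:ℝ) 1 := (convex_Ioo 0 1) hx hy ha hb hab
  set z := a • x + b • y with hzdef
  have hpt : ∀ φ : ℝ, Real.sqrt (1 - z ^ 2 * Real.sin φ ^ 2) / (1 - z ^ 2) ≤
      a * (Real.sqrt (1 - x ^ 2 * Real.sin φ ^ 2) / (1 - x ^ 2)) +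
      b * (Real.sqrt (1 - y ^ 2 * Real.sin φ ^ 2) / (1 - y ^ 2)) := by
    intro φ
    simpa [smul_eq_mul, hzdef] using (hΦ φ).2 hx hy ha hb hab
  have hI : (∫ φ in (0:ℝ)..(Real.pi / 2), Real.sqrt (1 - z ^ 2 * Real.sin φ ^ 2) / (1 - z ^ 2))
      ≤ ∫ φ in (0:ℝ)..(Real.pi / 2),
        (a * (Real.sqrt (1 - x ^ 2 * Real.sin φ ^ 2) / (1 - x ^ 2)) +
         b * (Real.sqrt (1 - y ^ 2 * Real.sin φ ^ 2) / (1 - y ^ 2))) :=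
    intervalIntegral.integral_mono_on (by positivity) (hint z hz)
      (((hint x hx).const_mul a).add ((hint y hy).const_mul b)) (fun φ _ => hpt φ)
  rw [intervalIntegral.integral_add ((hint x hx).const_mul a) ((hint y hy).const_mul b),
    intervalIntegral.integral_const_mul, intervalIntegral.integral_const_mul] at hI
  have hc : (0:ℝ) ≤ 2 / Real.pi := by positivity
  simp only [smul_eq_mul]
  calc 2 / Real.pi * ∫ φ in (0:ℝ)..(Real.pi / 2),
        Real.sqrt (1 - z ^ 2 * Real.sin φ ^ 2) / (1 - z ^ 2)
      ≤ 2 / Real.pi * (a * (∫ φ in (0:ℝ)..(Real.pi / 2),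
          Real.sqrt (1 - x ^ 2 * Real.sin φ ^ 2) / (1 - x ^ 2)) +
        b * (∫ φ in (0:ℝ)..(Real.pi / 2),
          Real.sqrt (1 - y ^ 2 * Real.sin φ ^ 2) / (1 - y ^ 2))) :=
        mul_le_mul_of_nonneg_left hI hc
    _ = _ := by ring
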